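/- arXiv:2507.18432 — 4 statements merged into one kernel-verified Lean document; each statement's English description precedes it below -/
import Mathlib

section
/- Let M be a 3×6 matrix over ℂ with columns v_1,…,v_6, and for a 3-element subset J ⊆ {1,…,6} let P_J(M) be the 3×3 minor of M on the columns indexed by J. Then P_{134}P_{256} − P_{156}P_{234} = P_{124}P_{356} − P_{123}P_{456}. -/
/-- For a `3 × 6` complex matrix `M` with Plücker coordinates
`P_J = det (columns J of M)`, one has
`P₁₃₄ P₂₅₆ − P₁₅₆ P₂₃₄ = P₁₂₄ P₃₅₆ − P₁₂₃ P₄₅₆`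
(columns written `1,…,6` in the informal statement, `0,…,5` here). -/
theorem plucker_identity_Gr36 (M : Matrix (Fin 3) (Fin 6) ℂ)
    (P : Fin 6 → Fin 6 → Fin 6 → ℂ)
    (hP : ∀ i j k, P i j k = (M.submatrix id ![i, j, k]).det) :
    P 0 2 3 * P 1 4 5 - P 0 4 5 * P 1 2 3
      = P 0 1 3 * P 2 4 5 - P 0 1 2 * P 3 4 5 := by
  simp only [hP, Matrix.det_fin_three, Matrix.submatrix_apply, id]
  simp [Matrix.cons_val_zero, Matrix.cons_val_one]
  ring
end

section
/- Let M be a 3×6 matrix over ℂ with columns v_1,…,v_6. Then det(v_1 × v_2, v_3 × v_4, v_5 × v_6) = P_{134}(M)·P_{256}(M) − P_{156}(M)·P_{234}(M), where × is the cross product on ℂ³ and P_{ijk} is the 3×3 minor of M on columns i,j,k. -/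
open Matrix

/-- For a `3 × 6` complex matrix `M` with columns `v₀,…,v₅` (written `v₁,…,v₆` informally),
`det (v₁×v₂, v₃×v₄, v₅×v₆) = P₁₃₄ P₂₅₆ − P₁₅₆ P₂₃₄`, where `P_{ijk}` is the maximal minor
of `M` on columns `i,j,k`. -/
theorem quadratic_cluster_variable_as_plucker (M : Matrix (Fin 3) (Fin 6) ℂ)
    (P : Fin 6 → Fin 6 → Fin 6 → ℂ)
    (hP : ∀ i j k, P i j k = (M.submatrix id ![i, j, k]).det) :
    Matrix.det (Matrix.of fun (r c : Fin 3) =>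
      ![crossProduct (fun i => M i 0) (fun i => M i 1),
        crossProduct (fun i => M i 2) (fun i => M i 3),
        crossProduct (fun i => M i 4) (fun i => M i 5)] c r)
      = P 0 2 3 * P 1 4 5 - P 0 4 5 * P 1 2 3 := by
  simp [hP, det_fin_three, crossProduct]
  ring
end

section
/- Let T be a standard Young tableau of rectangular shape a×b, let P denote promotion and E evacuation. Then E ∘ P = P^{-1} ∘ E as maps on standard Young tableaux of shape a×b; consequently P and E generate a dihedral group action on the set of standard Young tableaux of shape a×b. -/
/-- `IsSYT a b T` says that `T` (restricted to the rectangular grid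
`{0,…,a−1} × {0,…,b−1}`, rows indexed from the top and columns from the left) is a
standard Young tableau of rectangular shape `a × b`: a filling by the numbers
`1,…,ab`, each used exactly once, strictly increasing along each row and down each
column. -/
def IsSYT (a b : ℕ) (T : ℕ → ℕ → ℕ) : Prop :=
  (∀ i j, i < a → j < b → 1 ≤ T i j ∧ T i j ≤ a * b) ∧
  (∀ k, 1 ≤ k → k ≤ a * b → ∃! p : ℕ × ℕ, p.1 < a ∧ p.2 < b ∧ T p.1 p.2 = k) ∧
  (∀ i j j', i < a → j < j' → j' < b → T i j < T i j') ∧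
  (∀ i i' j, i < i' → i' < a → j < b → T i j < T i' j)

/-- One step of the jeu-de-taquin slide used in promotion: from a cell of the `a × b`
grid, move to the neighbour to the right or below carrying the smaller entry of `T`
(moving straight if only one of the two neighbours exists, and staying put at the
bottom-right corner). -/
def slideNext (a b : ℕ) (T : ℕ → ℕ → ℕ) (c : ℕ × ℕ) : ℕ × ℕ :=
  if c.1 + 1 < a then
    if c.2 + 1 < b then
      if T (c.1 + 1) c.2 < T c.1 (c.2 + 1) then (c.1 + 1, c.2) else (c.1, c.2 + 1)
    else (c.1 + 1, c.2)
  else if c.2 + 1 < b then (c.1, c.2 + 1) else c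

open Classical in
/-- Schützenberger promotion on fillings of the `a × b` grid: delete the entry `1`
(which for a standard tableau sits in the top-left cell `(0,0)`), slide the empty box
along the jeu-de-taquin path determined by `slideNext` until it reaches the
bottom-right corner, fill that corner with `ab + 1`, and subtract `1` from every
entry.  Cells outside the grid are left unchanged. -/
noncomputable def promo (a b : ℕ) (T : ℕ → ℕ → ℕ) : ℕ → ℕ → ℕ := fun i j =>
  if i < a ∧ j < b then
    if i = a - 1 ∧ j = b - 1 then a * b
    else if ∃ t : ℕ, (slideNext a b T)^[t] (0, 0) = (i, j) then
      T (slideNext a b T (i, j)).1 (slideNext a b T (i, j)).2 - 1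
    else T i j - 1
  else T i j

/-- Evacuation realized as rotate-and-complement:
`E(T)(i,j) = ab + 1 − T(a−1−i, b−1−j)` on the grid (0-indexed). -/
def evac (a b : ℕ) (T : ℕ → ℕ → ℕ) : ℕ → ℕ → ℕ := fun i j =>
  if i < a ∧ j < b then a * b + 1 - T (a - 1 - i) (b - 1 - j) else T i j

/-- The jeu-de-taquin path: iterates of `slideNext` starting at the top-left corner. -/
def ppath (a b : ℕ) (T : ℕ → ℕ → ℕ) (t : ℕ) : ℕ × ℕ := (slideNext a b T)^[t] (0, 0)

lemma slideNext_corner (a b : ℕ) (W : ℕ → ℕ → ℕ) (ha : 0 < a) (hb : 0 < b) :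
    slideNext a b W (a - 1, b - 1) = (a - 1, b - 1) := by
  unfold slideNext
  simp only
  rw [if_neg (by omega), if_neg (by omega)]

lemma iterate_corner (a b : ℕ) (W : ℕ → ℕ → ℕ) (ha : 0 < a) (hb : 0 < b) (k : ℕ) :
    (slideNext a b W)^[k] (a - 1, b - 1) = (a - 1, b - 1) := by
  induction k with
  | zero => rfl
  | succ k ih => rw [Function.iterate_succ_apply', ih, slideNext_corner a b W ha hb]

lemma stable_of (a b : ℕ) (W : ℕ → ℕ → ℕ) (ha : 0 < a) (hb : 0 < b) (m t : ℕ)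
    (hm : (slideNext a b W)^[m] (0, 0) = (a - 1, b - 1)) (ht : m ≤ t) :
    (slideNext a b W)^[t] (0, 0) = (a - 1, b - 1) := by
  obtain ⟨k, rfl⟩ := Nat.exists_eq_add_of_le ht
  rw [Nat.add_comm, Function.iterate_add_apply, hm, iterate_corner a b W ha hb]

lemma slideNext_step (a b : ℕ) (T : ℕ → ℕ → ℕ) (c : ℕ × ℕ)
    (h1 : c.1 < a) (h2 : c.2 < b) (hc : ¬(c.1 = a - 1 ∧ c.2 = b - 1)) :
    (slideNext a b T c = (c.1 + 1, c.2) ∧ c.1 + 1 < a) ∨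
    (slideNext a b T c = (c.1, c.2 + 1) ∧ c.2 + 1 < b) := by
  unfold slideNext
  by_cases hA : c.1 + 1 < a
  · by_cases hB : c.2 + 1 < b
    · rw [if_pos hA, if_pos hB]
      by_cases hC : T (c.1 + 1) c.2 < T c.1 (c.2 + 1)
      · rw [if_pos hC]; exact Or.inl ⟨rfl, hA⟩
      · rw [if_neg hC]; exact Or.inr ⟨rfl, hB⟩
    · rw [if_pos hA, if_neg hB]; exact Or.inl ⟨rfl, hA⟩
  · rw [if_neg hA]
    by_cases hD : c.2 + 1 < b
    · rw [if_pos hD]; exact Or.inr ⟨rfl, hD⟩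
    · omega

lemma path_bounds (a b : ℕ) (T : ℕ → ℕ → ℕ) (ha : 0 < a) (hb : 0 < b) :
    ∀ t, t ≤ a + b - 2 →
      (ppath a b T t).1 < a ∧ (ppath a b T t).2 < b ∧
      (ppath a b T t).1 + (ppath a b T t).2 = t := by
  intro t
  induction t with
  | zero => intro _; exact ⟨ha, hb, rfl⟩
  | succ t ih =>
    intro ht
    obtain ⟨h1, h2, h3⟩ := ih (by omega)
    have hc : ¬((ppath a b T t).1 = a - 1 ∧ (ppath a b T t).2 = b - 1) := by omega
    have hit : ppath a b T (t + 1) = slideNext a b T (ppath a b T t) :=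
      Function.iterate_succ_apply' _ _ _
    rcases slideNext_step a b T (ppath a b T t) h1 h2 hc with ⟨he, hlt⟩ | ⟨he, hlt⟩ <;>
      rw [hit, he] <;> simp only <;> omega

lemma path_corner (a b : ℕ) (T : ℕ → ℕ → ℕ) (ha : 0 < a) (hb : 0 < b) :
    ppath a b T (a + b - 2) = (a - 1, b - 1) := by
  obtain ⟨h1, h2, h3⟩ := path_bounds a b T ha hb (a + b - 2) le_rfl
  exact Prod.ext_iff.mpr ⟨by omega, by omega⟩

lemma path_stable (a b : ℕ) (T : ℕ → ℕ → ℕ) (ha : 0 < a) (hb : 0 < b) (t : ℕ)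
    (ht : a + b - 2 ≤ t) : ppath a b T t = (a - 1, b - 1) :=
  stable_of a b T ha hb (a + b - 2) t (path_corner a b T ha hb) ht

lemma promo_eval_on (a b : ℕ) (W : ℕ → ℕ → ℕ) (i j : ℕ) (hij : i < a ∧ j < b)
    (hcor : ¬(i = a - 1 ∧ j = b - 1))
    (hex : ∃ t : ℕ, (slideNext a b W)^[t] (0, 0) = (i, j)) :
    promo a b W i j = W (slideNext a b W (i, j)).1 (slideNext a b W (i, j)).2 - 1 := by
  simp only [promo]
  rw [if_pos hij, if_neg hcor, if_pos hex]

lemma promo_eval_off (a b : ℕ) (W : ℕ → ℕ → ℕ) (i j : ℕ) (hij : i < a ∧ j < b)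
    (hcor : ¬(i = a - 1 ∧ j = b - 1))
    (hex : ¬∃ t : ℕ, (slideNext a b W)^[t] (0, 0) = (i, j)) :
    promo a b W i j = W i j - 1 := by
  simp only [promo]
  rw [if_pos hij, if_neg hcor, if_neg hex]

lemma promo_corner (a b : ℕ) (W : ℕ → ℕ → ℕ) (ha : 0 < a) (hb : 0 < b) :
    promo a b W (a - 1) (b - 1) = a * b := by
  simp only [promo]
  rw [if_pos (show a - 1 < a ∧ b - 1 < b by omega)]
  simp

lemma promo_offgrid (a b : ℕ) (W : ℕ → ℕ → ℕ) (i j : ℕ) (hij : ¬(i < a ∧ j < b)) :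
    promo a b W i j = W i j := by
  simp only [promo]
  rw [if_neg hij]

lemma evac_val (a b : ℕ) (W : ℕ → ℕ → ℕ) (i j : ℕ) (hi : i < a) (hj : j < b) :
    evac a b W i j = a * b + 1 - W (a - 1 - i) (b - 1 - j) := by
  simp only [evac]
  rw [if_pos ⟨hi, hj⟩]

lemma evac_offgrid (a b : ℕ) (W : ℕ → ℕ → ℕ) (i j : ℕ) (hij : ¬(i < a ∧ j < b)) :
    evac a b W i j = W i j := by
  simp only [evac]
  rw [if_neg hij]

lemma promo_on_path (a b : ℕ) (T : ℕ → ℕ → ℕ) (ha : 0 < a) (hb : 0 < b) (s : ℕ)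
    (hs : s + 1 ≤ a + b - 2) :
    promo a b T (ppath a b T s).1 (ppath a b T s).2
      = T (ppath a b T (s + 1)).1 (ppath a b T (s + 1)).2 - 1 := by
  obtain ⟨h1, h2, h3⟩ := path_bounds a b T ha hb s (by omega)
  rw [promo_eval_on a b T _ _ ⟨h1, h2⟩ (by omega) ⟨s, rfl⟩]
  rw [show slideNext a b T ((ppath a b T s).1, (ppath a b T s).2) = ppath a b T (s + 1) from
    (Function.iterate_succ_apply' _ _ _).symm]

lemma promo_off_path (a b : ℕ) (T : ℕ → ℕ → ℕ) (ha : 0 < a) (hb : 0 < b) (i j : ℕ)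
    (hi : i < a) (hj : j < b) (h : ∀ t, ppath a b T t ≠ (i, j)) :
    promo a b T i j = T i j - 1 := by
  have hcor : ¬(i = a - 1 ∧ j = b - 1) := by
    intro ⟨e1, e2⟩
    apply h (a + b - 2)
    rw [path_corner a b T ha hb, e1, e2]
  exact promo_eval_off a b T i j ⟨hi, hj⟩ hcor (fun h' => h h'.choose h'.choose_spec)

lemma key (a b : ℕ) (T : ℕ → ℕ → ℕ) (hT : IsSYT a b T) (ha : 0 < a) (hb : 0 < b)
    (s : ℕ) (hs : s + 1 ≤ a + b - 2) :
    slideNext a b (evac a b (promo a b T))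
        (a - 1 - (ppath a b T (s + 1)).1, b - 1 - (ppath a b T (s + 1)).2)
      = (a - 1 - (ppath a b T s).1, b - 1 - (ppath a b T s).2) := by
  obtain ⟨h1, h2, h3⟩ := path_bounds a b T ha hb s (by omega)
  have hUs := promo_on_path a b T ha hb s hs
  have hit : ppath a b T (s + 1) = slideNext a b T (ppath a b T s) :=
    Function.iterate_succ_apply' _ _ _
  set X := (ppath a b T s).1 with hX
  set Y := (ppath a b T s).2 with hY
  rcases slideNext_step a b T (ppath a b T s) h1 h2 (by omega) with ⟨he, hlt⟩ | ⟨he, hlt⟩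
  · -- down step: ppath (s+1) = (X+1, Y)
    have hps : ppath a b T (s + 1) = (X + 1, Y) := hit.trans he
    have hps1 : (ppath a b T (s + 1)).1 = X + 1 := by rw [hps]
    have hps2 : (ppath a b T (s + 1)).2 = Y := by rw [hps]
    rw [hps1, hps2] at hUs ⊢
    -- goal : slideNext V (a-1-(X+1), b-1-Y) = (a-1-X, b-1-Y)
    unfold slideNext
    simp only
    rw [if_pos (show a - 1 - (X + 1) + 1 < a by omega)]
    by_cases hy : Y = 0
    · rw [if_neg (show ¬(b - 1 - Y + 1 < b) by omega)]
      exact Prod.ext_iff.mpr ⟨by omega, by omega⟩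
    · rw [if_pos (show b - 1 - Y + 1 < b by omega)]
      have hoff : promo a b T (X + 1) (Y - 1) = T (X + 1) (Y - 1) - 1 := by
        apply promo_off_path a b T ha hb _ _ (by omega) (by omega)
        intro t ht
        by_cases htm : t ≤ a + b - 2
        · obtain ⟨g1, g2, g3⟩ := path_bounds a b T ha hb t htm
          have hts : t = s := by
            have := g3; rw [ht] at this; simp only at this; omega
          rw [hts] at ht
          have h' := congrArg Prod.fst ht
          simp only at h'
          omega
        · have h' := (path_stable a b T ha hb t (by omega)).symm.trans ht
          rw [Prod.ext_iff] at h'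
          simp only at h'
          omega
      have hv1 : evac a b (promo a b T) (a - 1 - (X + 1) + 1) (b - 1 - Y)
          = a * b + 1 - (T (X + 1) Y - 1) := by
        rw [show a - 1 - (X + 1) + 1 = a - 1 - X by omega]
        rw [evac_val a b _ _ _ (by omega) (by omega)]
        rw [show a - 1 - (a - 1 - X) = X by omega, show b - 1 - (b - 1 - Y) = Y by omega, hUs]
      have hv2 : evac a b (promo a b T) (a - 1 - (X + 1)) (b - 1 - Y + 1)
          = a * b + 1 - (T (X + 1) (Y - 1) - 1) := by
        rw [evac_val a b _ _ _ (by omega) (by omega)]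
        rw [show a - 1 - (a - 1 - (X + 1)) = X + 1 by omega,
            show b - 1 - (b - 1 - Y + 1) = Y - 1 by omega, hoff]
      have hb1 := hT.1 (X + 1) Y (by omega) (by omega)
      have hb2 := hT.1 (X + 1) (Y - 1) (by omega) (by omega)
      have hrow := hT.2.2.1 (X + 1) (Y - 1) Y (by omega) (by omega) (by omega)
      rw [if_pos (show evac a b (promo a b T) (a - 1 - (X + 1) + 1) (b - 1 - Y)
            < evac a b (promo a b T) (a - 1 - (X + 1)) (b - 1 - Y + 1) by
          rw [hv1, hv2]; omega)]
      exact Prod.ext_iff.mpr ⟨by omega, by omega⟩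
  · -- right step: ppath (s+1) = (X, Y+1)
    have hps : ppath a b T (s + 1) = (X, Y + 1) := hit.trans he
    have hps1 : (ppath a b T (s + 1)).1 = X := by rw [hps]
    have hps2 : (ppath a b T (s + 1)).2 = Y + 1 := by rw [hps]
    rw [hps1, hps2] at hUs ⊢
    -- goal : slideNext V (a-1-X, b-1-(Y+1)) = (a-1-X, b-1-Y)
    unfold slideNext
    simp only
    by_cases hx : X = 0
    · rw [if_neg (show ¬(a - 1 - X + 1 < a) by omega),
          if_pos (show b - 1 - (Y + 1) + 1 < b by omega)]
      exact Prod.ext_iff.mpr ⟨by omega, by omega⟩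
    · rw [if_pos (show a - 1 - X + 1 < a by omega),
          if_pos (show b - 1 - (Y + 1) + 1 < b by omega)]
      have hoff : promo a b T (X - 1) (Y + 1) = T (X - 1) (Y + 1) - 1 := by
        apply promo_off_path a b T ha hb _ _ (by omega) (by omega)
        intro t ht
        by_cases htm : t ≤ a + b - 2
        · obtain ⟨g1, g2, g3⟩ := path_bounds a b T ha hb t htm
          have hts : t = s := by
            have := g3; rw [ht] at this; simp only at this; omega
          rw [hts] at ht
          have h' := congrArg Prod.fst ht
          simp only at h'
          omega
        · have h' := (path_stable a b T ha hb t (by omega)).symm.trans ht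
          rw [Prod.ext_iff] at h'
          simp only at h'
          omega
      have hv1 : evac a b (promo a b T) (a - 1 - X + 1) (b - 1 - (Y + 1))
          = a * b + 1 - (T (X - 1) (Y + 1) - 1) := by
        rw [evac_val a b _ _ _ (by omega) (by omega)]
        rw [show a - 1 - (a - 1 - X + 1) = X - 1 by omega,
            show b - 1 - (b - 1 - (Y + 1)) = Y + 1 by omega, hoff]
      have hv2 : evac a b (promo a b T) (a - 1 - X) (b - 1 - (Y + 1) + 1)
          = a * b + 1 - (T X (Y + 1) - 1) := by
        rw [show b - 1 - (Y + 1) + 1 = b - 1 - Y by omega]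
        rw [evac_val a b _ _ _ (by omega) (by omega)]
        rw [show a - 1 - (a - 1 - X) = X by omega, show b - 1 - (b - 1 - Y) = Y by omega, hUs]
      have hb1 := hT.1 X (Y + 1) (by omega) (by omega)
      have hb2 := hT.1 (X - 1) (Y + 1) (by omega) (by omega)
      have hcol := hT.2.2.2 (X - 1) X (Y + 1) (by omega) (by omega) (by omega)
      rw [if_neg (show ¬(evac a b (promo a b T) (a - 1 - X + 1) (b - 1 - (Y + 1))
            < evac a b (promo a b T) (a - 1 - X) (b - 1 - (Y + 1) + 1)) by
          rw [hv1, hv2]; omega)]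
      exact Prod.ext_iff.mpr ⟨by omega, by omega⟩

lemma qpath (a b : ℕ) (T : ℕ → ℕ → ℕ) (hT : IsSYT a b T) (ha : 0 < a) (hb : 0 < b) :
    ∀ t, t ≤ a + b - 2 →
      (slideNext a b (evac a b (promo a b T)))^[t] (0, 0)
        = (a - 1 - (ppath a b T (a + b - 2 - t)).1,
           b - 1 - (ppath a b T (a + b - 2 - t)).2) := by
  intro t
  induction t with
  | zero =>
    intro _
    rw [Function.iterate_zero_apply, Nat.sub_zero, path_corner a b T ha hb]
    simp only
    exact Prod.ext_iff.mpr ⟨by omega, by omega⟩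
  | succ t ih =>
    intro ht
    rw [Function.iterate_succ_apply', ih (by omega),
        show a + b - 2 - t = (a + b - 2 - (t + 1)) + 1 by omega]
    exact key a b T hT ha hb (a + b - 2 - (t + 1)) (by omega)

lemma T00_eq_one (a b : ℕ) (T : ℕ → ℕ → ℕ) (hT : IsSYT a b T) (ha : 0 < a) (hb : 0 < b) :
    T 0 0 = 1 := by
  obtain ⟨p, ⟨hp1, hp2, hp3⟩, -⟩ := hT.2.1 1 le_rfl (Nat.one_le_iff_ne_zero.mpr
    (by positivity))
  have e1 : p.1 = 0 := by
    by_contra h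
    have hcol := hT.2.2.2 0 p.1 p.2 (Nat.pos_of_ne_zero h) hp1 hp2
    have hbnd := (hT.1 0 p.2 ha hp2).1
    omega
  have e2 : p.2 = 0 := by
    by_contra h
    have hrow := hT.2.2.1 0 0 p.2 ha (Nat.pos_of_ne_zero h) hp2
    have hbnd := (hT.1 0 0 ha hb).1
    rw [e1] at hp3
    omega
  rw [e1, e2] at hp3
  exact hp3

/-- **Promotion and evacuation generate a dihedral action**: on rectangular standard
Young tableaux of shape `a × b` one has `E ∘ P = P⁻¹ ∘ E`.  Since promotion `P` is a
bijection on such tableaux, this is equivalently expressed as `P ∘ E ∘ P = E`. -/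
theorem promo_evac_dihedral (a b : ℕ) (T : ℕ → ℕ → ℕ) (hT : IsSYT a b T) :
    promo a b (evac a b (promo a b T)) = evac a b T := by
  funext i j
  by_cases hgrid : i < a ∧ j < b
  · obtain ⟨hi, hj⟩ := hgrid
    have ha : 0 < a := by omega
    have hb : 0 < b := by omega
    rw [evac_val a b T i j hi hj]
    by_cases hcor : i = a - 1 ∧ j = b - 1
    · obtain ⟨e1, e2⟩ := hcor
      rw [e1, e2, promo_corner a b _ ha hb,
          show a - 1 - (a - 1) = 0 by omega, show b - 1 - (b - 1) = 0 by omega,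
          T00_eq_one a b T hT ha hb]
      have : 1 ≤ a * b := Nat.one_le_iff_ne_zero.mpr (by positivity)
      omega
    · by_cases hpath : ∃ t, (slideNext a b (evac a b (promo a b T)))^[t] (0, 0) = (i, j)
      · obtain ⟨t, htq⟩ := hpath
        have htm : t < a + b - 2 := by
          by_contra h
          have h' := (stable_of a b (evac a b (promo a b T)) ha hb (a + b - 2) t
            (by
              have := qpath a b T hT ha hb (a + b - 2) le_rfl
              rw [Nat.sub_self] at this
              rw [this, show ppath a b T 0 = (0, 0) from rfl]
              simp only
              exact Prod.ext_iff.mpr ⟨by omega, by omega⟩) (by omega)).symm.trans htq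
          rw [Prod.ext_iff] at h'
          simp only at h'
          omega
        have hij := htq.symm.trans (qpath a b T hT ha hb t (by omega))
        rw [Prod.mk.injEq] at hij
        obtain ⟨ei, ej⟩ := hij
        obtain ⟨k1, k2, k3⟩ := path_bounds a b T ha hb (a + b - 2 - t) (by omega)
        obtain ⟨l1, l2, l3⟩ := path_bounds a b T ha hb (a + b - 2 - t - 1) (by omega)
        subst ei; subst ej
        rw [promo_eval_on a b _ _ _ ⟨hi, hj⟩ hcor ⟨t, htq⟩]
        rw [show a + b - 2 - t = (a + b - 2 - t - 1) + 1 by omega] at k1 k2 k3 ⊢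
        rw [key a b T hT ha hb (a + b - 2 - t - 1) (by omega)]
        simp only
        rw [evac_val a b _ _ _ (by omega) (by omega),
            show a - 1 - (a - 1 - (ppath a b T (a + b - 2 - t - 1)).1)
              = (ppath a b T (a + b - 2 - t - 1)).1 by omega,
            show b - 1 - (b - 1 - (ppath a b T (a + b - 2 - t - 1)).2)
              = (ppath a b T (a + b - 2 - t - 1)).2 by omega,
            promo_on_path a b T ha hb (a + b - 2 - t - 1) (by omega)]
        rw [show a - 1 - (a - 1 - (ppath a b T (a + b - 2 - t - 1 + 1)).1)
              = (ppath a b T (a + b - 2 - t - 1 + 1)).1 by omega,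
            show b - 1 - (b - 1 - (ppath a b T (a + b - 2 - t - 1 + 1)).2)
              = (ppath a b T (a + b - 2 - t - 1 + 1)).2 by omega]
        have hbnd := hT.1 (ppath a b T (a + b - 2 - t - 1 + 1)).1
          (ppath a b T (a + b - 2 - t - 1 + 1)).2 k1 k2
        omega
      · rw [promo_eval_off a b _ _ _ ⟨hi, hj⟩ hcor hpath,
            evac_val a b _ _ _ hi hj]
        have hoff : promo a b T (a - 1 - i) (b - 1 - j) = T (a - 1 - i) (b - 1 - j) - 1 := by
          apply promo_off_path a b T ha hb _ _ (by omega) (by omega)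
          intro t ht
          by_cases htm : t ≤ a + b - 2
          · apply hpath
            refine ⟨a + b - 2 - t, ?_⟩
            rw [qpath a b T hT ha hb (a + b - 2 - t) (by omega),
                show a + b - 2 - (a + b - 2 - t) = t by omega, ht]
            simp only
            exact Prod.ext_iff.mpr ⟨by omega, by omega⟩
          · have h' := (path_stable a b T ha hb t (by omega)).symm.trans ht
            rw [Prod.ext_iff] at h'
            simp only at h'
            apply hpath
            exact ⟨0, by rw [Function.iterate_zero_apply]; exact Prod.ext_iff.mpr ⟨by omega, by omega⟩⟩
        rw [hoff]
        have hbnd := hT.1 (a - 1 - i) (b - 1 - j) (by omega) (by omega)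
        omega
  · rw [promo_offgrid a b _ i j hgrid, evac_offgrid a b _ i j hgrid,
        promo_offgrid a b T i j hgrid, evac_offgrid a b T i j hgrid]
end

section
/- Let T be a standard Young tableau of rectangular shape 4×b and 1 ≤ i ≤ 3, and let c be the long cycle (1 2 ⋯ 4b) in the symmetric group on {1,…,4b}. Then c^{-1} ∘ prom_i(T) ∘ c = prom_i(P(T)), where P is promotion; i.e., promotion permutations rotate under promotion of the tableau. -/
/-- `promoPermSpec a b i T σ` says that `σ` realizes the `i`-th promotion permutation
`prom_i(T)` of a rectangular standard Young tableau `T` of shape `a × b` (rows of the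
tableau are 0-indexed here, so the paper's rows `i` and `i+1` are rows `i−1` and `i`):
`σ` restricts to a bijection of `{1,…,ab}`, and for each `j ∈ {1,…,ab}` there is a step
`t` of the promotion slide path of `P^{j−1}(T)` at which the path moves down from row
`i−1` to row `i` — the entry `p^{i,j}` carried up at that step is the value of
`P^{j−1}(T)` at the cell below — and `σ(j) ≡ p^{i,j} + j − 1 (mod ab)`. -/
def promoPermSpec (a b i : ℕ) (T : ℕ → ℕ → ℕ) (σ : ℕ → ℕ) : Prop :=
  Set.BijOn σ (Set.Icc 1 (a * b)) (Set.Icc 1 (a * b)) ∧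
  ∀ j ∈ Set.Icc 1 (a * b), ∃ t : ℕ,
    (slideNext a b ((promo a b)^[j - 1] T)
        ((slideNext a b ((promo a b)^[j - 1] T))^[t] (0, 0))).1
      = ((slideNext a b ((promo a b)^[j - 1] T))^[t] (0, 0)).1 + 1 ∧
    ((slideNext a b ((promo a b)^[j - 1] T))^[t] (0, 0)).1 + 1 = i ∧
    σ j ≡ ((promo a b)^[j - 1] T) i
        ((slideNext a b ((promo a b)^[j - 1] T))^[t] (0, 0)).2 + j - 1 [MOD a * b]

lemma slideNext_fst (a b : ℕ) (T : ℕ → ℕ → ℕ) (c : ℕ × ℕ) :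
    (slideNext a b T c).1 = c.1 ∨ (slideNext a b T c).1 = c.1 + 1 := by
  unfold slideNext
  split_ifs <;> simp

lemma path_fst_mono (a b : ℕ) (U : ℕ → ℕ → ℕ) (p : ℕ × ℕ) :
    Monotone fun t => ((slideNext a b U)^[t] p).1 := by
  apply monotone_nat_of_le_succ
  intro t
  simp only [Function.iterate_succ_apply']
  rcases slideNext_fst a b U ((slideNext a b U)^[t] p) with h | h <;> omega

lemma cross_eq (a b i : ℕ) (U : ℕ → ℕ → ℕ) {t t' : ℕ}
    (h1 : (slideNext a b U ((slideNext a b U)^[t] (0, 0))).1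
        = ((slideNext a b U)^[t] (0, 0)).1 + 1)
    (h2 : ((slideNext a b U)^[t] (0, 0)).1 + 1 = i)
    (h1' : (slideNext a b U ((slideNext a b U)^[t'] (0, 0))).1
        = ((slideNext a b U)^[t'] (0, 0)).1 + 1)
    (h2' : ((slideNext a b U)^[t'] (0, 0)).1 + 1 = i) : t = t' := by
  have mono := path_fst_mono a b U (0, 0)
  rcases lt_trichotomy t t' with h | h | h
  · have hm := mono (show t + 1 ≤ t' by omega)
    simp only [Function.iterate_succ_apply'] at hm
    omega
  · exact h
  · have hm := mono (show t' + 1 ≤ t by omega)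
    simp only [Function.iterate_succ_apply'] at hm
    omega

lemma modEq_icc_eq {N x y : ℕ} (hx1 : 1 ≤ x) (hx2 : x ≤ N) (hy1 : 1 ≤ y)
    (hy2 : y ≤ N) (h : x ≡ y [MOD N]) : x = y := by
  rcases le_total x y with hle | hle
  · have hd := (Nat.modEq_iff_dvd' hle).mp h
    have := Nat.eq_zero_of_dvd_of_lt hd (by omega)
    omega
  · have hd := (Nat.modEq_iff_dvd' hle).mp h.symm
    have := Nat.eq_zero_of_dvd_of_lt hd (by omega)
    omega

lemma cyc_modEq {N x : ℕ} (hx : x ≤ N) :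
    (if x = N then 1 else x + 1) ≡ x + 1 [MOD N] := by
  split_ifs with h
  · subst h
    exact (Nat.modEq_iff_dvd' (by omega)).mpr (by simpa using dvd_refl N)
  · rfl

lemma cyc_bijOn (N : ℕ) :
    Set.BijOn (fun x => if x = N then 1 else x + 1)
      (Set.Icc 1 N) (Set.Icc 1 N) := by
  refine ⟨?_, ?_, ?_⟩
  · intro x hx
    simp only [Set.mem_Icc] at *
    split_ifs <;> omega
  · intro x hx y hy h
    simp only [Set.mem_Icc] at hx hy
    by_cases h1 : x = N <;> by_cases h2 : y = N <;> simp only [h1, h2, if_pos,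
      if_neg, if_true, if_false] at h <;> omega
  · intro y hy
    simp only [Set.mem_Icc] at hy
    by_cases h : y = 1
    · exact ⟨N, by simp only [Set.mem_Icc]; omega, by simp [h]⟩
    · refine ⟨y - 1, by simp only [Set.mem_Icc]; omega, ?_⟩
      simp only
      split_ifs <;> omega

lemma promoPerm_rot_aux (b i : ℕ) (T : ℕ → ℕ → ℕ) (σ σ' : ℕ → ℕ)
    (hσ : promoPermSpec 4 b i T σ)
    (hσ' : promoPermSpec 4 b i (promo 4 b T) σ')
    (j : ℕ) (hj1 : 1 ≤ j) (hj2 : j + 1 ≤ 4 * b) :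
    σ (j + 1) = if σ' j = 4 * b then 1 else σ' j + 1 := by
  obtain ⟨t, ht1, ht2, ht3⟩ := hσ.2 (j + 1) (by simp only [Set.mem_Icc]; omega)
  simp only [Nat.add_sub_cancel] at ht1 ht2 ht3
  obtain ⟨t', ht1', ht2', ht3'⟩ := hσ'.2 j (by simp only [Set.mem_Icc]; omega)
  have hU : (promo 4 b)^[j - 1] (promo 4 b T) = (promo 4 b)^[j] T := by
    conv_rhs => rw [show j = (j - 1) + 1 by omega]
    rw [Function.iterate_succ_apply]
  rw [hU] at ht1' ht2' ht3'
  have htt : t = t' := cross_eq 4 b i ((promo 4 b)^[j] T) ht1 ht2 ht1' ht2'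
  subst htt
  set v := ((promo 4 b)^[j] T) i
      ((slideNext 4 b ((promo 4 b)^[j] T))^[t] (0, 0)).2 with hv
  have e1 : v + (j + 1) - 1 = v + j := by omega
  rw [e1] at ht3
  have hb1 : σ (j + 1) ∈ Set.Icc 1 (4 * b) :=
    hσ.1.1 (by simp only [Set.mem_Icc]; omega)
  have hb2 : σ' j ∈ Set.Icc 1 (4 * b) :=
    hσ'.1.1 (by simp only [Set.mem_Icc]; omega)
  simp only [Set.mem_Icc] at hb1 hb2
  have h4 : (if σ' j = 4 * b then 1 else σ' j + 1) ≡ σ' j + 1 [MOD 4 * b] :=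
    cyc_modEq hb2.2
  have h5 : σ' j + 1 ≡ v + j - 1 + 1 [MOD 4 * b] := ht3'.add_right 1
  have e2 : v + j - 1 + 1 = v + j := by omega
  rw [e2] at h5
  refine modEq_icc_eq hb1.1 hb1.2 ?_ ?_ (ht3.trans (h4.trans h5).symm)
  · split_ifs <;> omega
  · split_ifs <;> omega

/-- **Promotion permutations rotate under promotion of the tableau**: for `T` a standard
Young tableau of shape `4 × b`, `1 ≤ i ≤ 3`, and `c` the long cycle `(1 2 ⋯ 4b)` on
`{1,…,4b}`, one has `c⁻¹ ∘ prom_i(T) ∘ c = prom_i(P(T))`, i.e.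
`prom_i(T) ∘ c = c ∘ prom_i(P(T))` for any realizations `σ` of `prom_i(T)` and `σ'` of
`prom_i(P(T))`. -/
theorem promoPerm_rot (b i : ℕ) (hi1 : 1 ≤ i) (hi3 : i ≤ 3)
    (T : ℕ → ℕ → ℕ) (hT : IsSYT 4 b T)
    (σ σ' : ℕ → ℕ) (hσ : promoPermSpec 4 b i T σ)
    (hσ' : promoPermSpec 4 b i (promo 4 b T) σ') :
    ∀ j ∈ Set.Icc 1 (4 * b),
      σ (if j = 4 * b then 1 else j + 1) = (if σ' j = 4 * b then 1 else σ' j + 1) := by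
  intro j hj
  simp only [Set.mem_Icc] at hj
  by_cases hjN : j = 4 * b
  · subst hjN
    rw [if_pos rfl]
    -- use the bijection argument
    set c' : ℕ → ℕ := fun x => if x = 4 * b then 1 else x + 1 with hc'
    have hfb : Set.BijOn (σ ∘ c') (Set.Icc 1 (4 * b)) (Set.Icc 1 (4 * b)) :=
      hσ.1.comp (cyc_bijOn (4 * b))
    have hgb : Set.BijOn (c' ∘ σ') (Set.Icc 1 (4 * b)) (Set.Icc 1 (4 * b)) :=
      (cyc_bijOn (4 * b)).comp hσ'.1
    have hNmem : (4 * b) ∈ Set.Icc 1 (4 * b) := by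
      simp only [Set.mem_Icc]; omega
    have hmem : (c' ∘ σ') (4 * b) ∈ Set.Icc 1 (4 * b) := hgb.1 hNmem
    obtain ⟨x, hx, hfx⟩ := hfb.2.2 hmem
    by_cases hxN : x = 4 * b
    · subst hxN
      have hc1 : c' (4 * b) = 1 := by simp [hc']
      calc σ 1 = (σ ∘ c') (4 * b) := by rw [Function.comp_apply, hc1]
        _ = (c' ∘ σ') (4 * b) := hfx
        _ = if σ' (4 * b) = 4 * b then 1 else σ' (4 * b) + 1 := rfl
    · exfalso
      simp only [Set.mem_Icc] at hx
      have hstep := promoPerm_rot_aux b i T σ σ' hσ hσ' x hx.1 (by omega)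
      have hcx : c' x = x + 1 := by simp [hc', hxN]
      have hfg : (σ ∘ c') x = (c' ∘ σ') x := by
        rw [Function.comp_apply, hcx, hstep]; rfl
      have : x = 4 * b := hgb.2.1 (by simp only [Set.mem_Icc]; omega) hNmem
        (by rw [← hfg, hfx])
      exact hxN this
  · rw [if_neg hjN]
    exact promoPerm_rot_aux b i T σ σ' hσ hσ' j hj.1 (by omega)
end
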